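/- arXiv:1306.6697 — 5 statements merged into one kernel-verified Lean document; each statement's English description precedes it below -/
import Mathlib

section
/- For any integer k and nonnegative integer n, B_n^{(k)}(x) = \sum_{l=0}^{n} \left\{ \sum_{m=0}^{n-l} \frac{(-1)^{n-m-l}}{(m+1)^k} \binom{n}{l} m! S_2(n-l,m) \right\} x^l, where S_2 denotes the Stirling numbers of the second kind. -/
open PowerSeries Finset Nat

/-- The formal power series `e^{-t}`. -/
noncomputable def expNeg : PowerSeries ℂ := PowerSeries.rescale (-1) (PowerSeries.exp ℂ)

/-- The generating function `Li_k(1-e^{-t})/(1-e^{-t}) = ∑_{m≥0} (1-e^{-t})^m/(m+1)^k`,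
given coefficientwise (the sum truncates since `(1-e^{-t})^m` has order `≥ m`). -/
noncomputable def polyBernoulliGF (k : ℤ) : PowerSeries ℂ :=
  PowerSeries.mk fun n => ∑ m ∈ Finset.range (n + 1),
    (((m : ℂ) + 1) ^ k)⁻¹ * PowerSeries.coeff n ((1 - expNeg) ^ m)

/-- The poly-Bernoulli polynomial `B_n^{(k)}(x)`, defined by
`Li_k(1-e^{-t})/(1-e^{-t}) · e^{xt} = ∑ B_n^{(k)}(x) tⁿ/n!`. -/
noncomputable def polyBernoulli (k : ℤ) (n : ℕ) (x : ℂ) : ℂ :=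
  (n ! : ℂ) * PowerSeries.coeff n
    (polyBernoulliGF k * PowerSeries.mk fun j => x ^ j / (j ! : ℂ))

/-- Stirling numbers of the second kind, via `(e^t-1)^m = m! ∑_{l} S₂(l,m) t^l/l!`. -/
noncomputable def stirling2 (l m : ℕ) : ℂ :=
  (l ! : ℂ) / (m ! : ℂ) * PowerSeries.coeff l ((PowerSeries.exp ℂ - 1) ^ m)

lemma coeff_one_sub_expNeg_pow (m j : ℕ) :
    PowerSeries.coeff j ((1 - expNeg) ^ m) =
      (-1 : ℂ) ^ (m + j) * PowerSeries.coeff j ((PowerSeries.exp ℂ - 1) ^ m) := by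
  have h1 : (1 : PowerSeries ℂ) - expNeg = rescale (-1) (1 - PowerSeries.exp ℂ) := by
    rw [map_sub, map_one, expNeg]
  have h2 : ((1 : PowerSeries ℂ) - PowerSeries.exp ℂ) ^ m
      = PowerSeries.C ((-1 : ℂ) ^ m) * (PowerSeries.exp ℂ - 1) ^ m := by
    rw [← neg_sub (PowerSeries.exp ℂ) 1, neg_pow, map_pow, map_neg, map_one]
  rw [h1, ← map_pow, coeff_rescale, h2, PowerSeries.coeff_C_mul, pow_add]
  ring

theorem polyBernoulli_eq_sum_stirling (k : ℤ) (n : ℕ) (x : ℂ) :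
    polyBernoulli k n x =
      ∑ l ∈ Finset.range (n + 1),
        (∑ m ∈ Finset.range (n - l + 1),
          (-1 : ℂ) ^ (n - m - l) / ((m : ℂ) + 1) ^ k * (n.choose l : ℂ) * (m ! : ℂ) *
            stirling2 (n - l) m) * x ^ l := by
  conv_rhs => rw [← Finset.sum_range_reflect]
  rw [polyBernoulli, PowerSeries.coeff_mul, Finset.Nat.sum_antidiagonal_eq_sum_range_succ_mk,
    Finset.mul_sum]
  refine Finset.sum_congr rfl fun i hi => ?_
  have hin : i ≤ n := Nat.lt_succ_iff.mp (Finset.mem_range.mp hi)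
  have hni : n + 1 - 1 - i = n - i := by omega
  have hnni : n - (n - i) = i := by omega
  simp only [hni, hnni]
  conv_lhs => rw [polyBernoulliGF, coeff_mk, coeff_mk, Finset.sum_mul, Finset.mul_sum]
  conv_rhs => rw [Finset.sum_mul]
  refine Finset.sum_congr rfl fun m hm => ?_
  have hmi : m ≤ i := Nat.lt_succ_iff.mp (Finset.mem_range.mp hm)
  rw [coeff_one_sub_expNeg_pow, stirling2, Nat.choose_symm hin]
  have hsign : ((-1 : ℂ)) ^ (m + i) = (-1 : ℂ) ^ (n - m - (n - i)) := by
    have h : n - m - (n - i) = i - m := by omega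
    have h2 : m + i = (i - m) + 2 * m := by omega
    rw [h, h2, pow_add, pow_mul, neg_one_sq, one_pow, mul_one]
  have hfac : (n ! : ℂ) = (n.choose i : ℂ) * (i ! : ℂ) * ((n - i)! : ℂ) := by
    rw [← Nat.cast_mul, ← Nat.cast_mul, Nat.choose_mul_factorial_mul_factorial hin]
  have hm0 : (m ! : ℂ) ≠ 0 := Nat.cast_ne_zero.mpr (Nat.factorial_ne_zero m)
  have hn0 : ((n - i)! : ℂ) ≠ 0 := Nat.cast_ne_zero.mpr (Nat.factorial_ne_zero _)
  have hz : ((m : ℂ) + 1) ^ k ≠ 0 := by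
    apply zpow_ne_zero
    have : ((m : ℂ) + 1) = ((m + 1 : ℕ) : ℂ) := by push_cast; ring
    rw [this]
    exact Nat.cast_ne_zero.mpr (Nat.succ_ne_zero m)
  rw [← hsign, hfac]
  field_simp
end

section
/- For any integer k and nonnegative integer n, B_{n+1}^{(k)}(x) = x B_n^{(k)}(x) - \frac{1}{n+1} \sum_{l=0}^{n+1} \binom{n+1}{l} B_l \left\{ B_{n+1-l}^{(k)}(x) - B_{n+1-l}^{(k-1)}(x) \right\}, where B_l denotes the l-th ordinary Bernoulli number. -/
open PowerSeries Finset Nat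

lemma exp_mul_expNeg : PowerSeries.exp ℂ * expNeg = 1 := by
  have h := PowerSeries.exp_mul_exp_eq_exp_add (1 : ℂ) (-1)
  simp only [add_neg_cancel, rescale_one, RingHom.id_apply, rescale_zero, RingHom.coe_comp,
    Function.comp_apply, PowerSeries.constantCoeff_exp, map_one] at h
  rw [expNeg]
  exact h

lemma deriv_expNeg : PowerSeries.derivative ℂ expNeg = -expNeg := by
  ext n
  simp only [PowerSeries.coeff_derivative, expNeg, PowerSeries.coeff_rescale,
    PowerSeries.coeff_exp, map_neg, LinearMap.neg_apply, eq_ratCast]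
  rw [Nat.factorial_succ]
  have hf : ((n ! : ℂ)) ≠ 0 := by exact_mod_cast Nat.factorial_ne_zero n
  have hn : ((n : ℂ) + 1) ≠ 0 := by
    have : ((n : ℂ) + 1) = ((n + 1 : ℕ) : ℂ) := by push_cast; ring
    rw [this]; exact_mod_cast Nat.succ_ne_zero n
  push_cast
  field_simp
  ring

lemma constCoeff_one_sub_expNeg : PowerSeries.constantCoeff (1 - expNeg) = 0 := by
  rw [map_sub, map_one, expNeg, ← PowerSeries.coeff_zero_eq_constantCoeff_apply,
    PowerSeries.coeff_rescale, PowerSeries.coeff_exp]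
  simp

lemma coeff_pow_eq_zero {m n : ℕ} (h : n < m) :
    PowerSeries.coeff n ((1 - expNeg) ^ m) = 0 := by
  have hd : (PowerSeries.X : PowerSeries ℂ) ^ m ∣ (1 - expNeg) ^ m :=
    pow_dvd_pow_of_dvd (PowerSeries.X_dvd_iff.mpr constCoeff_one_sub_expNeg) m
  exact PowerSeries.X_pow_dvd_iff.mp hd n h

lemma coeff_GF (k : ℤ) {n N : ℕ} (h : n < N) :
    PowerSeries.coeff n (polyBernoulliGF k) =
      ∑ m ∈ Finset.range N, (((m : ℂ) + 1) ^ k)⁻¹ * PowerSeries.coeff n ((1 - expNeg) ^ m) := by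
  rw [polyBernoulliGF, PowerSeries.coeff_mk]
  refine Finset.sum_subset (Finset.range_subset_range.mpr h) ?_
  intro m _ hm
  rw [Finset.mem_range, not_lt] at hm
  rw [coeff_pow_eq_zero (lt_of_lt_of_le (Nat.lt_succ_self n) hm), mul_zero]

lemma deriv_pow_key (m : ℕ) :
    (PowerSeries.exp ℂ - 1) * PowerSeries.derivative ℂ ((1 - expNeg) ^ m) =
      (m : PowerSeries ℂ) * (1 - expNeg) ^ m := by
  have hD : PowerSeries.derivative ℂ (1 - expNeg) = expNeg := by
    rw [map_sub, deriv_expNeg, Derivation.map_one_eq_zero]; ring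
  have hkey : (PowerSeries.exp ℂ - 1) * expNeg = 1 - expNeg := by
    rw [sub_mul, exp_mul_expNeg, one_mul]
  rw [Derivation.leibniz_pow, hD]
  cases m with
  | zero => simp
  | succ m =>
    rw [smul_eq_mul, nsmul_eq_mul, Nat.succ_sub_one, pow_succ]
    push_cast
    linear_combination ((m : PowerSeries ℂ) + 1) * (1 - expNeg) ^ m * hkey

lemma key1 (k : ℤ) :
    (PowerSeries.exp ℂ - 1) * PowerSeries.derivative ℂ (polyBernoulliGF k) =
      polyBernoulliGF (k - 1) - polyBernoulliGF k := by
  ext n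
  set N := n + 2 with hN
  set S : PowerSeries ℂ :=
    ∑ m ∈ Finset.range N, PowerSeries.C ((((m : ℂ) + 1) ^ k)⁻¹) * (1 - expNeg) ^ m with hS
  have hcoeff : ∀ j ≤ n, PowerSeries.coeff j (PowerSeries.derivative ℂ (polyBernoulliGF k)) =
      PowerSeries.coeff j (PowerSeries.derivative ℂ S) := by
    intro j hj
    rw [PowerSeries.coeff_derivative, PowerSeries.coeff_derivative,
      coeff_GF k (show j + 1 < N by omega)]
    congr 1
    rw [hS, map_sum]
    refine Finset.sum_congr rfl fun m _ => ?_
    rw [PowerSeries.coeff_C_mul]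
  have hmul : PowerSeries.coeff n
        ((PowerSeries.exp ℂ - 1) * PowerSeries.derivative ℂ (polyBernoulliGF k)) =
      PowerSeries.coeff n ((PowerSeries.exp ℂ - 1) * PowerSeries.derivative ℂ S) := by
    rw [PowerSeries.coeff_mul, PowerSeries.coeff_mul]
    refine Finset.sum_congr rfl fun p hp => ?_
    rw [Finset.HasAntidiagonal.mem_antidiagonal] at hp
    rw [hcoeff p.2 (by omega)]
  rw [hmul]
  have hSd : (PowerSeries.exp ℂ - 1) * PowerSeries.derivative ℂ S =
      ∑ m ∈ Finset.range N, PowerSeries.C ((((m : ℂ) + 1) ^ k)⁻¹ * m) * (1 - expNeg) ^ m := by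
    rw [hS, map_sum, Finset.mul_sum]
    refine Finset.sum_congr rfl fun m _ => ?_
    rw [Derivation.leibniz, PowerSeries.derivative_C, smul_zero, add_zero, smul_eq_mul,
      map_mul, mul_left_comm, deriv_pow_key m, map_natCast]
    ring
  rw [hSd, map_sum, map_sub, coeff_GF (k-1) (show n < N by omega), coeff_GF k (show n < N by omega),
    ← Finset.sum_sub_distrib]
  refine Finset.sum_congr rfl fun m _ => ?_
  rw [PowerSeries.coeff_C_mul, ← sub_mul]
  congr 1
  have hx : ((m : ℂ) + 1) ≠ 0 := by
    have : ((m : ℂ) + 1) = ((m + 1 : ℕ) : ℂ) := by push_cast; ring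
    rw [this]; exact_mod_cast Nat.succ_ne_zero m
  rw [← zpow_neg, ← zpow_neg, neg_sub, sub_eq_add_neg (1:ℤ), zpow_add₀ hx, zpow_one]
  ring

noncomputable def Ex (x : ℂ) : PowerSeries ℂ := PowerSeries.mk fun j => x ^ j / (j ! : ℂ)

lemma deriv_Ex (x : ℂ) : PowerSeries.derivative ℂ (Ex x) = PowerSeries.C x * Ex x := by
  ext n
  rw [PowerSeries.coeff_derivative, PowerSeries.coeff_C_mul, Ex, PowerSeries.coeff_mk,
    PowerSeries.coeff_mk, Nat.factorial_succ]
  have hf : ((n ! : ℂ)) ≠ 0 := by exact_mod_cast Nat.factorial_ne_zero n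
  have hn : ((n : ℂ) + 1) ≠ 0 := by
    have : ((n : ℂ) + 1) = ((n + 1 : ℕ) : ℂ) := by push_cast; ring
    rw [this]; exact_mod_cast Nat.succ_ne_zero n
  push_cast
  field_simp
  ring

lemma key2 (k : ℤ) (x : ℂ) :
    PowerSeries.X * PowerSeries.derivative ℂ (polyBernoulliGF k * Ex x) =
      bernoulliPowerSeries ℂ * (polyBernoulliGF (k - 1) * Ex x - polyBernoulliGF k * Ex x)
        + PowerSeries.C x * (PowerSeries.X * (polyBernoulliGF k * Ex x)) := by
  have h1 := key1 k
  have h3 := bernoulliPowerSeries_mul_exp_sub_one ℂ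
  rw [Derivation.leibniz, smul_eq_mul, smul_eq_mul, deriv_Ex]
  linear_combination (bernoulliPowerSeries ℂ * Ex x) * h1
    - (Ex x * PowerSeries.derivative ℂ (polyBernoulliGF k)) * h3

theorem polyBernoulli_recurrence (k : ℤ) (n : ℕ) (x : ℂ) :
    polyBernoulli k (n + 1) x =
      x * polyBernoulli k n x - (1 / ((n : ℂ) + 1)) *
        ∑ l ∈ Finset.range (n + 2), ((n + 1).choose l : ℂ) * (bernoulli l : ℂ) *
          (polyBernoulli k (n + 1 - l) x - polyBernoulli (k - 1) (n + 1 - l) x) := by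
  have hstar := congrArg (PowerSeries.coeff (n + 1)) (key2 k x)
  set G := polyBernoulliGF k * Ex x with hG
  set G' := polyBernoulliGF (k - 1) * Ex x with hG'
  have hB : PowerSeries.coeff (n + 1) (bernoulliPowerSeries ℂ * (G' - G)) =
      ∑ l ∈ Finset.range (n + 2), (bernoulli l : ℂ) / (l ! : ℂ) *
        (PowerSeries.coeff (n + 1 - l) G' - PowerSeries.coeff (n + 1 - l) G) := by
    rw [PowerSeries.coeff_mul, Finset.Nat.sum_antidiagonal_eq_sum_range_succ_mk]
    refine Finset.sum_congr rfl fun l _ => ?_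
    rw [bernoulliPowerSeries, PowerSeries.coeff_mk, map_sub, eq_ratCast]
    push_cast
    ring
  rw [PowerSeries.coeff_succ_X_mul, PowerSeries.coeff_derivative, map_add, hB,
    PowerSeries.coeff_C_mul, PowerSeries.coeff_succ_X_mul] at hstar
  have hsum : (n ! : ℂ) * (∑ l ∈ Finset.range (n + 2), (bernoulli l : ℂ) / (l ! : ℂ) *
        (PowerSeries.coeff (n + 1 - l) G' - PowerSeries.coeff (n + 1 - l) G)) =
      -(1 / ((n : ℂ) + 1)) * ∑ l ∈ Finset.range (n + 2), ((n + 1).choose l : ℂ) *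
        (bernoulli l : ℂ) * (((n + 1 - l)! : ℂ) * PowerSeries.coeff (n + 1 - l) G -
          ((n + 1 - l)! : ℂ) * PowerSeries.coeff (n + 1 - l) G') := by
    rw [Finset.mul_sum, Finset.mul_sum]
    refine Finset.sum_congr rfl fun l hl => ?_
    rw [Finset.mem_range] at hl
    have hfac : ((n + 1).choose l * l ! * (n + 1 - l)! : ℕ) = (n + 1)! :=
      Nat.choose_mul_factorial_mul_factorial (by omega)
    have hfacC : (((n + 1).choose l : ℂ)) * (l ! : ℂ) * ((n + 1 - l)! : ℂ) =
        ((n : ℂ) + 1) * (n ! : ℂ) := by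
      have := congrArg (fun t : ℕ => (t : ℂ)) hfac
      push_cast [Nat.factorial_succ] at this
      push_cast
      linear_combination this
    have hl' : ((l ! : ℂ)) ≠ 0 := by exact_mod_cast Nat.factorial_ne_zero l
    have hn : ((n : ℂ) + 1) ≠ 0 := by
      have : ((n : ℂ) + 1) = ((n + 1 : ℕ) : ℂ) := by push_cast; ring
      rw [this]; exact_mod_cast Nat.succ_ne_zero n
    field_simp
    linear_combination (-(bernoulli l : ℂ) * (PowerSeries.coeff (n + 1 - l) G' -
      PowerSeries.coeff (n + 1 - l) G)) * hfacC
  have hgoal : polyBernoulli k (n + 1) x = ((n + 1)! : ℂ) * PowerSeries.coeff (n + 1) G := rfl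
  have h0 : polyBernoulli k n x = (n ! : ℂ) * PowerSeries.coeff n G := rfl
  rw [hgoal, h0]
  have hrw : ∀ l ∈ Finset.range (n + 2),
      ((n + 1).choose l : ℂ) * (bernoulli l : ℂ) *
        (polyBernoulli k (n + 1 - l) x - polyBernoulli (k - 1) (n + 1 - l) x) =
      ((n + 1).choose l : ℂ) * (bernoulli l : ℂ) *
        (((n + 1 - l)! : ℂ) * PowerSeries.coeff (n + 1 - l) G -
          ((n + 1 - l)! : ℂ) * PowerSeries.coeff (n + 1 - l) G') := fun l _ => rfl
  rw [Finset.sum_congr rfl hrw]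
  have hfs : ((n + 1)! : ℂ) = ((n : ℂ) + 1) * (n ! : ℂ) := by
    push_cast [Nat.factorial_succ]; ring
  rw [hfs]
  linear_combination (n ! : ℂ) * hstar + hsum
end

section
/- For any integer k, nonnegative integers n and r, B_n^{(k)}(x) = \sum_{m=0}^{n} \left\{ \binom{n}{m} \sum_{l=0}^{n-m} \frac{r! (n-m)_l}{(l+r)!} S_2(l+r, r) B_{n-l-m}^{(k)} \right\} \mathbb{B}_m^{(r)}(x), where (a)_l = a(a-1)\cdots(a-l+1) is the falling factorial and \mathbb{B}_m^{(r)}(x) are Bernoulli polynomials of order r. -/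
open PowerSeries Finset Nat

/-- Bernoulli polynomials of order `r`: `(t/(e^t-1))^r e^{xt} = ∑ 𝔹_n^{(r)}(x) tⁿ/n!`,
using that `(e^t-1)/t = ∑ tʲ/(j+1)!` is invertible. -/
noncomputable def bernoulliHigher (r n : ℕ) (x : ℂ) : ℂ :=
  (n ! : ℂ) * PowerSeries.coeff n
    (((PowerSeries.mk fun j => (1 : ℂ) / ((j + 1)! : ℂ))⁻¹) ^ r *
      PowerSeries.mk fun j => x ^ j / (j ! : ℂ))

/-- Euler polynomials of order `r`: `(2/(e^t+1))^r e^{xt} = ∑ E_n^{(r)}(x) tⁿ/n!`. -/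
noncomputable def eulerHigher (r n : ℕ) (x : ℂ) : ℂ :=
  (n ! : ℂ) * PowerSeries.coeff n
    ((((1 + PowerSeries.exp ℂ) * PowerSeries.C (1 / 2))⁻¹) ^ r *
      PowerSeries.mk fun j => x ^ j / (j ! : ℂ))

/-- Frobenius-Euler polynomials of order `r`:
`((1-λ)/(e^t-λ))^r e^{xt} = ∑ H_n^{(r)}(x|λ) tⁿ/n!`. -/
noncomputable def frobeniusEuler (lam : ℂ) (r n : ℕ) (x : ℂ) : ℂ :=
  (n ! : ℂ) * PowerSeries.coeff n
    ((((PowerSeries.exp ℂ - PowerSeries.C lam) * PowerSeries.C (1 - lam)⁻¹)⁻¹) ^ r *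
      PowerSeries.mk fun j => x ^ j / (j ! : ℂ))


noncomputable def Aser : PowerSeries ℂ := PowerSeries.mk fun j => (1 : ℂ) / ((j + 1)! : ℂ)

lemma exp_sub_one_eq : PowerSeries.exp ℂ - 1 = PowerSeries.X * Aser := by
  ext j
  cases j with
  | zero => simp [Aser, PowerSeries.coeff_exp, PowerSeries.coeff_one]
  | succ j =>
      simp [Aser, PowerSeries.coeff_exp, PowerSeries.coeff_succ_X_mul, PowerSeries.coeff_one]

lemma Aser_mul_inv : Aser * Aser⁻¹ = 1 := by
  apply PowerSeries.mul_inv_cancel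
  simp [Aser]

lemma stirl_coeff (r l : ℕ) : (r ! : ℂ) / ((l + r)! : ℂ) * stirling2 (l + r) r
    = PowerSeries.coeff l (Aser ^ r) := by
  rw [stirling2, exp_sub_one_eq, mul_pow, PowerSeries.coeff_X_pow_mul]
  have h1 : ((l + r)! : ℂ) ≠ 0 := Nat.cast_ne_zero.2 (Nat.factorial_ne_zero _)
  have h2 : (r ! : ℂ) ≠ 0 := Nat.cast_ne_zero.2 (Nat.factorial_ne_zero _)
  field_simp

lemma polyBernoulli_zero_eq (k : ℤ) (m : ℕ) :
    polyBernoulli k m 0 = (m ! : ℂ) * PowerSeries.coeff m (polyBernoulliGF k) := by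
  have h : (PowerSeries.mk fun j => (0 : ℂ) ^ j / (j ! : ℂ)) = 1 := by
    ext j
    cases j with
    | zero => simp
    | succ j => simp [PowerSeries.coeff_one]
  rw [polyBernoulli, h, mul_one]

theorem polyBernoulli_eq_sum_bernoulliHigher (k : ℤ) (n r : ℕ) (x : ℂ) :
    polyBernoulli k n x =
      ∑ m ∈ Finset.range (n + 1),
        ((n.choose m : ℂ) * ∑ l ∈ Finset.range (n - m + 1),
          (r ! : ℂ) * ((n - m).descFactorial l : ℂ) / ((l + r)! : ℂ) *
            stirling2 (l + r) r * polyBernoulli k (n - l - m) 0) *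
          bernoulliHigher r m x := by
  have key : ∀ m ∈ Finset.range (n + 1),
      ((n.choose m : ℂ) * ∑ l ∈ Finset.range (n - m + 1),
          (r ! : ℂ) * ((n - m).descFactorial l : ℂ) / ((l + r)! : ℂ) *
            stirling2 (l + r) r * polyBernoulli k (n - l - m) 0) *
        bernoulliHigher r m x
      = (n ! : ℂ) * (PowerSeries.coeff m ((Aser⁻¹) ^ r *
            PowerSeries.mk fun j => x ^ j / (j ! : ℂ)) *
          PowerSeries.coeff (n - m) (Aser ^ r * polyBernoulliGF k)) := by
    intro m hm
    rw [Finset.mem_range, Nat.lt_succ_iff] at hm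
    have hinner : ∀ l ∈ Finset.range (n - m + 1),
        (r ! : ℂ) * ((n - m).descFactorial l : ℂ) / ((l + r)! : ℂ) *
          stirling2 (l + r) r * polyBernoulli k (n - l - m) 0
        = ((n - m)! : ℂ) * (PowerSeries.coeff l (Aser ^ r) *
            PowerSeries.coeff (n - m - l) (polyBernoulliGF k)) := by
      intro l hl
      rw [Finset.mem_range, Nat.lt_succ_iff] at hl
      have h1 : n - l - m = n - m - l := by omega
      rw [h1, polyBernoulli_zero_eq]
      have h2 : (((n - m - l)! : ℂ)) * ((n - m).descFactorial l : ℂ) = ((n - m)! : ℂ) := by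
        rw [← Nat.cast_mul, Nat.factorial_mul_descFactorial hl]
      calc (r ! : ℂ) * ((n - m).descFactorial l : ℂ) / ((l + r)! : ℂ) *
            stirling2 (l + r) r * (((n - m - l)! : ℂ) *
              PowerSeries.coeff (n - m - l) (polyBernoulliGF k))
          = (((n - m - l)! : ℂ) * ((n - m).descFactorial l : ℂ)) *
              (((r ! : ℂ) / ((l + r)! : ℂ) * stirling2 (l + r) r) *
                PowerSeries.coeff (n - m - l) (polyBernoulliGF k)) := by ring
        _ = _ := by rw [h2, stirl_coeff]
    rw [Finset.sum_congr rfl hinner, ← Finset.mul_sum]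
    have hmulc : PowerSeries.coeff (n - m) (Aser ^ r * polyBernoulliGF k)
        = ∑ l ∈ Finset.range (n - m + 1), PowerSeries.coeff l (Aser ^ r) *
            PowerSeries.coeff (n - m - l) (polyBernoulliGF k) := by
      rw [PowerSeries.coeff_mul, Finset.Nat.sum_antidiagonal_eq_sum_range_succ_mk]
    rw [← hmulc, bernoulliHigher]
    have hfac : (n.choose m : ℂ) * ((n - m)! : ℂ) * (m ! : ℂ) = (n ! : ℂ) := by
      rw [← Nat.cast_mul, ← Nat.cast_mul, mul_right_comm, Nat.choose_mul_factorial_mul_factorial hm]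
    show (n.choose m : ℂ) * (((n - m)! : ℂ) * PowerSeries.coeff (n - m) (Aser ^ r * polyBernoulliGF k)) *
        ((m ! : ℂ) * PowerSeries.coeff m ((Aser⁻¹) ^ r * PowerSeries.mk fun j => x ^ j / (j ! : ℂ))) = _
    calc _ = ((n.choose m : ℂ) * ((n - m)! : ℂ) * (m ! : ℂ)) *
          (PowerSeries.coeff m ((Aser⁻¹) ^ r * PowerSeries.mk fun j => x ^ j / (j ! : ℂ)) *
            PowerSeries.coeff (n - m) (Aser ^ r * polyBernoulliGF k)) := by ring
      _ = _ := by rw [hfac]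
  rw [Finset.sum_congr rfl key, ← Finset.mul_sum]
  have hprod : (Aser⁻¹ ^ r * PowerSeries.mk fun j => x ^ j / (j ! : ℂ)) *
      (Aser ^ r * polyBernoulliGF k)
      = polyBernoulliGF k * PowerSeries.mk fun j => x ^ j / (j ! : ℂ) := by
    have : Aser ^ r * Aser⁻¹ ^ r = 1 := by rw [← mul_pow, Aser_mul_inv, one_pow]
    calc (Aser⁻¹ ^ r * PowerSeries.mk fun j => x ^ j / (j ! : ℂ)) *
        (Aser ^ r * polyBernoulliGF k)
        = (Aser ^ r * Aser⁻¹ ^ r) *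
          (polyBernoulliGF k * PowerSeries.mk fun j => x ^ j / (j ! : ℂ)) := by ring
      _ = _ := by rw [this, one_mul]
  rw [show (∑ m ∈ Finset.range (n + 1),
      PowerSeries.coeff m ((Aser⁻¹) ^ r * PowerSeries.mk fun j => x ^ j / (j ! : ℂ)) *
        PowerSeries.coeff (n - m) (Aser ^ r * polyBernoulliGF k))
      = PowerSeries.coeff n ((Aser⁻¹ ^ r * PowerSeries.mk fun j => x ^ j / (j ! : ℂ)) *
          (Aser ^ r * polyBernoulliGF k)) from
    (by rw [PowerSeries.coeff_mul, Finset.Nat.sum_antidiagonal_eq_sum_range_succ_mk]),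
    hprod, polyBernoulli]
end

section
/- For any integer k, nonnegative integers n and r, B_n^{(k)}(x) = \frac{1}{2^r} \sum_{m=0}^{n} \left\{ \binom{n}{m} \sum_{j=0}^{r} \binom{r}{j} B_{n-m}^{(k)}(j) \right\} E_m^{(r)}(x), where E_m^{(r)}(x) are the Euler polynomials of order r. -/
open PowerSeries Finset Nat

lemma eX_nat (j : ℕ) :
    (PowerSeries.mk fun i => ((j : ℂ)) ^ i / (i ! : ℂ)) = PowerSeries.exp ℂ ^ j := by
  rw [PowerSeries.exp_pow_eq_rescale_exp]
  ext i
  simp [PowerSeries.coeff_rescale, PowerSeries.coeff_exp, div_eq_mul_inv,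
    map_inv₀, map_natCast]

theorem polyBernoulli_eq_sum_eulerHigher (k : ℤ) (n r : ℕ) (x : ℂ) :
    polyBernoulli k n x =
      (1 / 2 ^ r) * ∑ m ∈ Finset.range (n + 1),
        ((n.choose m : ℂ) * ∑ j ∈ Finset.range (r + 1),
          (r.choose j : ℂ) * polyBernoulli k (n - m) j) * eulerHigher r m x := by
  set e := PowerSeries.exp ℂ with he
  set u := (1 + e) * PowerSeries.C (1 / 2 : ℂ) with hu
  set A := polyBernoulliGF k with hA
  set Q := ((u⁻¹) ^ r) * PowerSeries.mk fun j => x ^ j / (j ! : ℂ) with hQ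
  set P := A * u ^ r with hP
  have hcc : PowerSeries.constantCoeff u ≠ 0 := by
    simp only [hu, map_mul, map_add, map_one, PowerSeries.constantCoeff_exp,
      PowerSeries.constantCoeff_C, he]
    norm_num
  have huu : u ^ r * (u⁻¹) ^ r = 1 := by
    rw [← mul_pow, mul_comm, PowerSeries.inv_mul_cancel u hcc, one_pow]
  -- coefficients of P
  have hPcoeff : ∀ l : ℕ, (l ! : ℂ) * PowerSeries.coeff l P =
      (1 / 2 ^ r) * ∑ j ∈ Finset.range (r + 1),
        (r.choose j : ℂ) * polyBernoulli k l j := by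
    intro l
    have hur : u ^ r = (∑ j ∈ Finset.range (r + 1),
        e ^ j * ((r.choose j : ℕ) : ℂ⟦X⟧)) * PowerSeries.C ((1/2 : ℂ) ^ r) := by
      rw [hu, mul_pow, ← map_pow, add_comm (1 : ℂ⟦X⟧) e, add_pow]
      congr 1
      refine Finset.sum_congr rfl fun j hj => ?_
      rw [one_pow, mul_one]
    have : P = (∑ j ∈ Finset.range (r + 1),
        (A * e ^ j) * ((r.choose j : ℕ) : ℂ⟦X⟧)) * PowerSeries.C ((1/2 : ℂ) ^ r) := by
      rw [hP, hur, ← mul_assoc, Finset.mul_sum]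
      congr 1
      exact Finset.sum_congr rfl fun j _ => (mul_assoc _ _ _).symm
    rw [this, PowerSeries.coeff_mul_C, map_sum, Finset.sum_mul, Finset.mul_sum, Finset.mul_sum]
    refine Finset.sum_congr rfl fun j hj => ?_
    have hB : polyBernoulli k l ((j : ℕ) : ℂ) =
        (l ! : ℂ) * PowerSeries.coeff l (A * e ^ j) := by
      rw [polyBernoulli, eX_nat, he, hA]
    rw [hB]
    have : PowerSeries.coeff l ((A * e ^ j) * ((r.choose j : ℕ) : ℂ⟦X⟧)) =
        PowerSeries.coeff l (A * e ^ j) * ((r.choose j : ℕ) : ℂ) := by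
      rw [← PowerSeries.coeff_mul_C]
      norm_cast
    rw [this]
    push_cast
    ring_nf
    simp only [one_div]
  -- euler coefficients
  have hEcoeff : ∀ m : ℕ, eulerHigher r m x = (m ! : ℂ) * PowerSeries.coeff m Q :=
    fun m => by rw [hQ, hu, he]; rfl
  -- main
  have key : polyBernoulli k n x = (n ! : ℂ) * PowerSeries.coeff n (Q * P) := by
    rw [polyBernoulli, hQ, hP]
    congr 2
    rw [mul_comm _ (A * u ^ r), mul_assoc, ← mul_assoc (u ^ r), huu, one_mul, hA]
  rw [key, PowerSeries.coeff_mul, Finset.Nat.sum_antidiagonal_eq_sum_range_succ_mk,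
    Finset.mul_sum, Finset.mul_sum]
  refine Finset.sum_congr rfl fun m hm => ?_
  have hmn : m ≤ n := Nat.lt_succ_iff.mp (Finset.mem_range.mp hm)
  have hfac : ((n : ℕ)! : ℂ) = (n.choose m : ℂ) * ((m ! : ℂ) * ((n - m)! : ℂ)) := by
    rw [← Nat.choose_mul_factorial_mul_factorial hmn]
    push_cast
    ring
  rw [hfac, hEcoeff]
  have := hPcoeff (n - m)
  calc (n.choose m : ℂ) * ((m ! : ℂ) * ((n - m)! : ℂ)) *
        (PowerSeries.coeff m Q * PowerSeries.coeff (n - m) P)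
      = (n.choose m : ℂ) * ((m ! : ℂ) * PowerSeries.coeff m Q) *
        (((n - m)! : ℂ) * PowerSeries.coeff (n - m) P) := by ring
    _ = _ := by
        rw [this]
        ring
end

section
/- Let \lambda be a complex number with \lambda \ne 1. For any integer k, nonnegative integers n and r, B_n^{(k)}(x) = \frac{1}{(1-\lambda)^r} \sum_{m=0}^{n} \left\{ \binom{n}{m} \sum_{j=0}^{r} \binom{r}{j} (-\lambda)^{r-j} B_{n-m}^{(k)}(j) \right\} H_m^{(r)}(x|\lambda), where H_m^{(r)}(x|\lambda) are the Frobenius-Euler polynomials of order r. -/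
open PowerSeries Finset Nat

lemma mk_eq_rescale_exp (x : ℂ) :
    (PowerSeries.mk fun j => x ^ j / (j ! : ℂ)) = PowerSeries.rescale x (PowerSeries.exp ℂ) := by
  ext n
  simp [PowerSeries.coeff_rescale, PowerSeries.coeff_exp]
  ring

theorem polyBernoulli_eq_sum_frobeniusEuler (lam : ℂ) (hlam : lam ≠ 1) (k : ℤ) (n r : ℕ)
    (x : ℂ) :
    polyBernoulli k n x =
      (1 / (1 - lam) ^ r) * ∑ m ∈ Finset.range (n + 1),
        ((n.choose m : ℂ) * ∑ j ∈ Finset.range (r + 1),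
          (r.choose j : ℂ) * (-lam) ^ (r - j) * polyBernoulli k (n - m) j) *
          frobeniusEuler lam r m x := by
  set U : PowerSeries ℂ := (PowerSeries.exp ℂ - PowerSeries.C lam) * PowerSeries.C (1 - lam)⁻¹ with hUdef
  set G : PowerSeries ℂ := polyBernoulliGF k with hGdef
  have hl : (1 : ℂ) - lam ≠ 0 := sub_ne_zero.mpr (Ne.symm hlam)
  have hU0 : constantCoeff U = 1 := by
    simp [hUdef, mul_inv_cancel₀ hl]
  have hUinv : U⁻¹ * U = 1 := PowerSeries.inv_mul_cancel U (by rw [hU0]; exact one_ne_zero)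
  have hFr : (U⁻¹) ^ r * U ^ r = 1 := by rw [← mul_pow, hUinv, one_pow]
  set c : ℕ → ℂ := fun j => (r.choose j : ℂ) * (-lam) ^ (r - j) * ((1 - lam)⁻¹) ^ r with hcdef
  have hUr : U ^ r = ∑ j ∈ range (r + 1), C (c j) * exp ℂ ^ j := by
    have h1 : exp ℂ - C lam = exp ℂ + C (-lam) := by rw [map_neg]; ring
    rw [hUdef, h1, mul_pow, add_pow, Finset.sum_mul]
    refine Finset.sum_congr rfl fun j _ => ?_
    simp only [hcdef, map_mul, map_pow, map_natCast]
    ring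
  set A : PowerSeries ℂ := (U⁻¹) ^ r * rescale x (exp ℂ) with hAdef
  have key : G * rescale x (exp ℂ) =
      ∑ j ∈ range (r + 1), C (c j) * (A * (G * rescale ((j : ℕ) : ℂ) (exp ℂ))) := by
    calc G * rescale x (exp ℂ) = G * rescale x (exp ℂ) * ((U⁻¹) ^ r * U ^ r) := by
          rw [hFr, mul_one]
      _ = _ := by
          rw [hUr]
          simp only [Finset.mul_sum]
          refine Finset.sum_congr rfl fun j _ => ?_
          rw [exp_pow_eq_rescale_exp, hAdef]
          ring
  have hcoeff : PowerSeries.coeff n (G * rescale x (exp ℂ)) =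
      ∑ j ∈ range (r + 1), c j * ∑ m ∈ range (n + 1),
        PowerSeries.coeff m A *
          PowerSeries.coeff (n - m) (G * rescale ((j : ℕ) : ℂ) (exp ℂ)) := by
    rw [key, map_sum]
    refine Finset.sum_congr rfl fun j _ => ?_
    rw [PowerSeries.coeff_C_mul, PowerSeries.coeff_mul,
      Finset.Nat.sum_antidiagonal_eq_sum_range_succ_mk]
  unfold polyBernoulli frobeniusEuler
  simp only [mk_eq_rescale_exp, ← hGdef, ← hUdef, ← hAdef]
  rw [hcoeff]
  simp only [Finset.mul_sum, Finset.sum_mul]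
  rw [Finset.sum_comm]
  refine Finset.sum_congr rfl fun m hm => ?_
  refine Finset.sum_congr rfl fun j _ => ?_
  have hmn : m ≤ n := Nat.lt_succ_iff.mp (Finset.mem_range.mp hm)
  have hfact : ((n.choose m : ℂ)) * (m ! : ℂ) * ((n - m)! : ℂ) = (n ! : ℂ) := by
    rw [← Nat.cast_mul, ← Nat.cast_mul, Nat.choose_mul_factorial_mul_factorial hmn]
  rw [← hfact, hcdef, one_div, ← inv_pow]
  ring
end
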